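/- arXiv:2602.06261 — 2 statements merged into one kernel-verified Lean document; each statement's English description precedes it below -/
import Mathlib

section
/- Let D > 0 and t0 be real. Suppose τ, δ : [t0, ∞) → ℝ are continuously differentiable with 0 ≤ δ(t) ≤ τ(t) ≤ D and δ'(t) < 1 for all t ≥ t0. Then for every t ≥ t0 there exists a unique c ∈ [0, D] such that c = τ(t) − δ(t − c). -/
/-- existence and uniqueness of c ∈ [0,D] with c = τ(t) − δ(t − c). -/
theorem stmt0 (D t0 : ℝ) (hD : 0 < D) (τ δ δ' : ℝ → ℝ)
    (hδderiv : ∀ t, t0 - D ≤ t → HasDerivAt δ (δ' t) t)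
    (hτcont : ContinuousOn τ (Set.Ici (t0 - D)))
    (hbounds : ∀ t, t0 - D ≤ t → 0 ≤ δ t ∧ δ t ≤ τ t ∧ τ t ≤ D)
    (hδ'lt : ∀ t, t0 - D ≤ t → δ' t < 1) :
    ∀ t, t0 ≤ t → ∃! c, c ∈ Set.Icc (0 : ℝ) D ∧ c = τ t - δ (t - c) := by
  intro t ht
  set F : ℝ → ℝ := fun c => c + δ (t - c) with hF
  have hder : ∀ c ∈ Set.Icc (0:ℝ) D, HasDerivAt F (1 - δ' (t - c)) c := by
    intro c hc
    obtain ⟨hc0, hcD⟩ := hc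
    have h1 : t0 - D ≤ t - c := by linarith
    have h2 : HasDerivAt (fun c : ℝ => t - c) (-1) c := by
      exact (hasDerivAt_id' c).const_sub t
    have h3 := (hδderiv (t - c) h1).comp c h2
    have h4 := (hasDerivAt_id c).add h3
    have : (1 : ℝ) + δ' (t - c) * (-1) = 1 - δ' (t - c) := by ring
    rw [← this]; exact h4
  have hcont : ContinuousOn F (Set.Icc 0 D) :=
    fun c hc => ((hder c hc).continuousAt).continuousWithinAt
  have hmono : StrictMonoOn F (Set.Icc 0 D) := by
    apply strictMonoOn_of_deriv_pos (convex_Icc 0 D) hcont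
    intro c hc
    rw [interior_Icc] at hc
    have hc' : c ∈ Set.Icc (0:ℝ) D := ⟨le_of_lt hc.1, le_of_lt hc.2⟩
    rw [(hder c hc').deriv]
    have := hδ'lt (t - c) (by obtain ⟨h0, hd⟩ := hc'; linarith)
    linarith
  have ht0D : t0 - D ≤ t := by linarith
  have hF0 : F 0 ≤ τ t := by
    have := (hbounds t ht0D).2.1
    simpa [hF] using this
  have hFD : τ t ≤ F D := by
    have h1 : t0 - D ≤ t - D := by linarith
    simp only [hF]
    linarith [(hbounds (t - D) h1).1, (hbounds t ht0D).2.2]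
  obtain ⟨c, hc, hFc⟩ := intermediate_value_Icc (le_of_lt hD) hcont ⟨hF0, hFD⟩
  simp only [hF] at hFc
  refine ⟨c, ⟨hc, by linarith⟩, ?_⟩
  rintro y ⟨hy, hyeq⟩
  apply hmono.injOn hy hc
  simp only [hF]
  linarith
end

section
/- Under the setting of the substitution lemma with constant delays (x eventually positive solution, P̄(t) := P(t) − Q(t − τ + δ) ≥ 0, R(t) + ∫_{t−τ+δ}^{t} Q(s) ds ≤ 1, and for every T0 there exists ξ > T0 with P̄(ξ) > 0), the function y(t) = x(t) − R(t)x(t − r) − ∫_{t−τ+δ}^{t} Q(s)x(s − δ) ds satisfies y'(t) ≤ 0 and 0 < y(t) ≤ x(t) for all sufficiently large t. -/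
lemma hasDerivAt_slidingIntegral (g : ℝ → ℝ) (hg : Continuous g) (τ δ t : ℝ) :
    HasDerivAt (fun u => ∫ s in (u - τ + δ)..u, g s) (g t - g (t - τ + δ)) t := by
  have hF : ∀ u : ℝ, HasDerivAt (fun v => ∫ s in (0:ℝ)..v, g s) (g u) u := fun u =>
    (hg.integral_hasStrictDerivAt 0 u).hasDerivAt
  have hinner : HasDerivAt (fun u : ℝ => u - τ + δ) 1 t := by
    simpa using ((hasDerivAt_id t).sub_const τ).add_const δ
  have h2 : HasDerivAt (fun u => (∫ s in (0:ℝ)..u, g s) - ∫ s in (0:ℝ)..(u - τ + δ), g s)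
      (g t - g (t - τ + δ)) t := by
    have := (hF t).sub (((hF (t - τ + δ)).comp t hinner))
    simp at this; exact this
  refine h2.congr_of_eventuallyEq (Filter.Eventually.of_forall fun u => ?_)
  exact (intervalIntegral.integral_interval_sub_left (hg.intervalIntegrable _ _)
      (hg.intervalIntegrable _ _)).symm



/-- substitution lemma with constant delays: eventually
    y'(t) ≤ 0 and 0 < y(t) ≤ x(t). -/
theorem stmt7 (T D r τ δ : ℝ) (hD : 0 < D)
    (hr0 : 0 ≤ r) (hrD : r ≤ D) (hδ0 : 0 ≤ δ) (hδτ : δ ≤ τ) (hτD : τ ≤ D)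
    (R P Q x z' : ℝ → ℝ)
    (hRcont : Continuous R) (hPcont : Continuous P) (hQcont : Continuous Q)
    (hR0 : ∀ t, 0 ≤ R t) (hP0 : ∀ t, 0 ≤ P t) (hQ0 : ∀ t, 0 ≤ Q t)
    (hxcont : Continuous x) (hxpos : ∀ t, T ≤ t → 0 < x t)
    (hz : ∀ t, T < t → HasDerivAt (fun s => x s - R s * x (s - r)) (z' t) t)
    (heq : ∀ t, T < t → z' t + P t * x (t - τ) - Q t * x (t - δ) = 0)
    (hPbar : ∀ t, 0 ≤ P t - Q (t - τ + δ))
    (hPbarpos : ∀ T0 : ℝ, ∃ ξ, T0 < ξ ∧ 0 < P ξ - Q (ξ - τ + δ))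
    (hkey : ∀ t, R t + (∫ s in (t - τ + δ)..t, Q s) ≤ 1) :
    ∃ T1, T ≤ T1 ∧ ∀ t, T1 ≤ t →
      deriv (fun u => x u - R u * x (u - r) - ∫ s in (u - τ + δ)..u, Q s * x (s - δ)) t ≤ 0 ∧
      0 < x t - R t * x (t - r) - (∫ s in (t - τ + δ)..t, Q s * x (s - δ)) ∧
      x t - R t * x (t - r) - (∫ s in (t - τ + δ)..t, Q s * x (s - δ)) ≤ x t := by
  set y : ℝ → ℝ := fun u => x u - R u * x (u - r) - ∫ s in (u - τ + δ)..u, Q s * x (s - δ)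
    with hy_def
  have hgcont : Continuous fun s => Q s * x (s - δ) :=
    hQcont.mul (hxcont.comp (continuous_id.sub continuous_const))
  -- derivative of y
  have hyderiv : ∀ t, T < t → HasDerivAt y (-((P t - Q (t - τ + δ)) * x (t - τ))) t := by
    intro t ht
    have h1 := (hz t ht).sub (hasDerivAt_slidingIntegral (fun s => Q s * x (s - δ)) hgcont τ δ t)
    have hz'eq : z' t = Q t * x (t - δ) - P t * x (t - τ) := by linarith [heq t ht]
    have hval : z' t - (Q t * x (t - δ) - Q (t - τ + δ) * x (t - τ + δ - δ))
        = -((P t - Q (t - τ + δ)) * x (t - τ)) := by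
      have h2 : t - τ + δ - δ = t - τ := by ring
      rw [h2, hz'eq]; ring
    rw [hval] at h1
    exact h1
  -- y is nonincreasing on [T + D, ∞)
  have hanti : AntitoneOn y (Set.Ici (T + D)) := by
    apply antitoneOn_of_deriv_nonpos (convex_Ici _)
    · exact fun s hs => ((hyderiv s (by simp only [Set.mem_Ici] at hs; linarith)).continuousAt).continuousWithinAt
    · intro s hs
      rw [interior_Ici] at hs
      exact ((hyderiv s (by simp only [Set.mem_Ioi] at hs; linarith)).differentiableAt).differentiableWithinAt
    · intro s hs
      rw [interior_Ici] at hs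
      simp only [Set.mem_Ioi] at hs
      rw [(hyderiv s (by linarith)).deriv]
      exact neg_nonpos.mpr (mul_nonneg (hPbar s) (hxpos _ (by linarith)).le)
  refine ⟨T + D, by linarith, fun t ht => ⟨?_, ?_, ?_⟩⟩
  · rw [(hyderiv t (by linarith)).deriv]
    exact neg_nonpos.mpr (mul_nonneg (hPbar t) (hxpos _ (by linarith)).le)
  · -- positivity: by contradiction
    by_contra hyt'
    push_neg at hyt'
    have hyt : y t ≤ 0 := hyt'
    obtain ⟨ξ, hξ1, hξ2⟩ := hPbarpos t
    have hxξτ : 0 < x (ξ - τ) := hxpos _ (by linarith)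
    have hcneg : -((P ξ - Q (ξ - τ + δ)) * x (ξ - τ)) < 0 :=
      neg_lt_zero.mpr (mul_pos hξ2 hxξτ)
    have hyd := hyderiv ξ (by linarith)
    have hslope := hasDerivAt_iff_tendsto_slope.mp hyd
    have hmono : nhdsWithin ξ (Set.Ioi ξ) ≤ nhdsWithin ξ {ξ}ᶜ :=
      nhdsWithin_mono _ (fun u hu => ne_of_gt hu)
    have hev : ∀ᶠ u in nhdsWithin ξ (Set.Ioi ξ), slope y ξ u < 0 :=
      (hslope.mono_left hmono).eventually_lt_const hcneg
    obtain ⟨t1, hslope1, ht1⟩ := (hev.and self_mem_nhdsWithin).exists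
    have ht1' : ξ < t1 := ht1
    have hyt1ξ : y t1 < y ξ := by
      rw [slope_def_field] at hslope1
      have hpos : 0 < t1 - ξ := sub_pos.mpr ht1'
      rcases div_neg_iff.mp hslope1 with ⟨h1, h2⟩ | ⟨h1, h2⟩
      · linarith
      · linarith
    have hyξt : y ξ ≤ y t := hanti (Set.mem_Ici.mpr ht) (Set.mem_Ici.mpr (by linarith)) hξ1.le
    have hyt1neg : y t1 < 0 := by linarith
    set α : ℝ := -y t1 with hα_def
    have hα : 0 < α := by simp only [hα_def]; linarith
    have hT2 : T + D ≤ t1 := by linarith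
    have hyle : ∀ s, t1 ≤ s → y s ≤ -α := by
      intro s hs
      have := hanti (Set.mem_Ici.mpr hT2) (Set.mem_Ici.mpr (by linarith)) hs
      simp only [hα_def]; linarith
    have hxle : ∀ s, t1 ≤ s →
        x s ≤ -α + (R s * x (s - r) + ∫ u in (s - τ + δ)..s, Q u * x (u - δ)) := by
      intro s hs
      have h : x s - R s * x (s - r) - (∫ u in (s - τ + δ)..s, Q u * x (u - δ)) ≤ -α :=
        hyle s hs
      linarith
    have hwin : ∀ s, t1 ≤ s → ∀ M, 0 ≤ M → x (s - r) ≤ M →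
        (∀ u ∈ Set.Icc (s - τ + δ) s, x (u - δ) ≤ M) → x s ≤ M - α := by
      intro s hs M hM hMr hMw
      have hint : (∫ u in (s - τ + δ)..s, Q u * x (u - δ)) ≤ ∫ u in (s - τ + δ)..s, Q u * M := by
        apply intervalIntegral.integral_mono_on (by linarith)
          (hgcont.intervalIntegrable _ _) ((hQcont.mul continuous_const).intervalIntegrable _ _)
        intro u hu
        exact mul_le_mul_of_nonneg_left (hMw u hu) (hQ0 u)
      have hconst : (∫ u in (s - τ + δ)..s, Q u * M) = (∫ u in (s - τ + δ)..s, Q u) * M :=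
        intervalIntegral.integral_mul_const _ _
      have hQintpos : 0 ≤ ∫ u in (s - τ + δ)..s, Q u :=
        intervalIntegral.integral_nonneg (by linarith) (fun u _ => hQ0 u)
      have hcoef : R s * M + (∫ u in (s - τ + δ)..s, Q u) * M ≤ M := by
        nlinarith [hkey s]
      have hx := hxle s hs
      have hR : R s * x (s - r) ≤ R s * M := mul_le_mul_of_nonneg_left hMr (hR0 s)
      linarith
    obtain ⟨c0, hc0mem, hc0max⟩ := isCompact_Icc.exists_isMaxOn
      (Set.nonempty_Icc.mpr (by linarith : t1 - D ≤ t1)) hxcont.continuousOn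
    have hbd : ∀ s, t1 ≤ s → x s ≤ x c0 := by
      intro s hs
      obtain ⟨c, hcmem, hcmax⟩ := isCompact_Icc.exists_isMaxOn
        (Set.nonempty_Icc.mpr (by linarith : t1 - D ≤ s)) hxcont.continuousOn
      rcases le_or_gt c t1 with hc | hc
      · exact le_trans (isMaxOn_iff.mp hcmax s ⟨by linarith, le_refl s⟩)
          (isMaxOn_iff.mp hc0max c ⟨hcmem.1, hc⟩)
      · exfalso
        have hcs : c ≤ s := hcmem.2
        have hxc_pos : 0 < x c := hxpos c (by linarith)
        have hmr : x (c - r) ≤ x c :=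
          isMaxOn_iff.mp hcmax (c - r) ⟨by linarith, by linarith⟩
        have hmw : ∀ u ∈ Set.Icc (c - τ + δ) c, x (u - δ) ≤ x c := by
          intro u hu
          exact isMaxOn_iff.mp hcmax (u - δ) ⟨by linarith [hu.1], by linarith [hu.2]⟩
        have h := hwin c hc.le (x c) hxc_pos.le hmr hmw
        linarith
    have hind : ∀ n : ℕ, ∀ s, t1 + n * D ≤ s → x s ≤ x c0 - n * α := by
      intro n
      induction n with
      | zero => intro s hs; push_cast at hs ⊢; simpa using hbd s (by linarith)
      | succ n ih =>
        intro s hs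
        push_cast at hs ⊢
        have hnD : (0:ℝ) ≤ (n : ℝ) * D := mul_nonneg n.cast_nonneg hD.le
        have hs1 : t1 ≤ s := by linarith
        have hM0 : (0:ℝ) ≤ x c0 - n * α := by
          have h1 := ih s (by linarith)
          have h2 := hxpos s (by linarith)
          linarith
        have hmr : x (s - r) ≤ x c0 - n * α := ih (s - r) (by linarith)
        have hmw : ∀ u ∈ Set.Icc (s - τ + δ) s, x (u - δ) ≤ x c0 - n * α := by
          intro u hu
          exact ih (u - δ) (by linarith [hu.1])
        have h := hwin s hs1 _ hM0 hmr hmw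
        linarith
    obtain ⟨n, hn⟩ := exists_nat_gt ((x c0) / α)
    have hKn : x c0 < n * α := by
      have := (div_lt_iff₀ hα).mp hn
      linarith
    have hnD : (0:ℝ) ≤ (n : ℝ) * D := mul_nonneg n.cast_nonneg hD.le
    have h1 := hind n (t1 + n * D) (le_refl _)
    have h2 := hxpos (t1 + n * D) (by linarith)
    linarith
  · -- y t ≤ x t
    have h1 : 0 ≤ R t * x (t - r) := mul_nonneg (hR0 t) (hxpos _ (by linarith)).le
    have h2 : 0 ≤ ∫ s in (t - τ + δ)..t, Q s * x (s - δ) := by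
      apply intervalIntegral.integral_nonneg (by linarith)
      intro u hu
      exact mul_nonneg (hQ0 u) (hxpos _ (by simp only [Set.mem_Icc] at hu; linarith [hu.1])).le
    linarith
end
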